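/- (Transfer principle) Let f and g be noncommutative polynomials in ℕ⟨x₁,…,x_m⟩ (the monoid semiring of the free monoid on x₁,…,x_m over ℕ) with disjoint supports (no monomial occurs in both f and g). If f − g is a polynomial identity of the matrix ring Mₙ(ℤ), i.e., f(A₁,…,A_m) = g(A₁,…,A_m) for all A₁,…,A_m ∈ Mₙ(ℤ), then f(A₁,…,A_m) = g(A₁,…,A_m) for all A₁,…,A_m ∈ Mₙ(R), for every commutative semiring R. -/

import Mathlib

noncomputable section

/-- Evaluation of a polynomial of the free ℕ-semiring `ℕ⟨x₁,…,x_m⟩` (the monoid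
semiring of the free monoid on m letters over ℕ) at an m-tuple of elements of a
semiring `S`. -/
def evalNC {m : ℕ} {S : Type*} [Semiring S]
    (f : MonoidAlgebra ℕ (FreeMonoid (Fin m))) (A : Fin m → S) : S :=
  MonoidAlgebra.lift ℕ S (FreeMonoid (Fin m)) (FreeMonoid.lift A) f

lemma evalNC_ringHom {m : ℕ} {S T : Type*} [Semiring S] [Semiring T] (φ : S →+* T)
    (f : MonoidAlgebra ℕ (FreeMonoid (Fin m))) (A : Fin m → S) :
    φ (evalNC f A) = evalNC f (fun k => φ (A k)) := by
  unfold evalNC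
  rw [MonoidAlgebra.lift_apply, MonoidAlgebra.lift_apply, map_finsuppSum]
  refine Finsupp.sum_congr fun w _ => ?_
  rw [map_nsmul]
  congr 1
  have h : (φ.toMonoidHom).comp (FreeMonoid.lift A)
      = FreeMonoid.lift (fun k => φ (A k)) := FreeMonoid.hom_eq (by simp)
  exact DFunLike.congr_fun h w

/-- STATEMENT 18 (Transfer principle): if `f, g ∈ ℕ⟨x₁,…,x_m⟩` have disjoint supports
and `f − g` is a polynomial identity of `Mₙ(ℤ)` (i.e. `f` and `g` agree on all
m-tuples of n×n integer matrices), then `f` and `g` agree on all m-tuples of n×n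
matrices over every commutative semiring `R`. -/
theorem transfer_principle (m n : ℕ) (f g : MonoidAlgebra ℕ (FreeMonoid (Fin m)))
    (hdisj : Disjoint f.coeff.support g.coeff.support)
    (hZ : ∀ A : Fin m → Matrix (Fin n) (Fin n) ℤ, evalNC f A = evalNC g A) :
    ∀ (R : Type*) [CommSemiring R] (A : Fin m → Matrix (Fin n) (Fin n) R),
      evalNC f A = evalNC g A := by
  intro R _ A
  set σ := (Fin m × Fin n × Fin n)
  -- generic matrices over MvPolynomial σ ℤ and MvPolynomial σ ℕ
  set Xz : Fin m → Matrix (Fin n) (Fin n) (MvPolynomial σ ℤ) :=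
    fun k => Matrix.of fun i j => MvPolynomial.X (k, i, j) with hXz
  set Xn : Fin m → Matrix (Fin n) (Fin n) (MvPolynomial σ ℕ) :=
    fun k => Matrix.of fun i j => MvPolynomial.X (k, i, j) with hXn
  -- step 1: f and g agree on the generic integer matrices
  have keyZ : evalNC f Xz = evalNC g Xz := by
    refine Matrix.ext fun i j => ?_
    apply MvPolynomial.funext
    intro x
    have hf := evalNC_ringHom (MvPolynomial.eval x).mapMatrix f Xz
    have hg := evalNC_ringHom (MvPolynomial.eval x).mapMatrix g Xz
    simp only [RingHom.mapMatrix_apply] at hf hg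
    have hA : (fun k => (Xz k).map (MvPolynomial.eval x))
        = fun k => Matrix.of fun i j => x (k, i, j) := by
      funext k; ext i j; simp [hXz]
    rw [hA] at hf hg
    have := hZ (fun k => Matrix.of fun i j => x (k, i, j))
    have hent : ((evalNC f Xz).map (MvPolynomial.eval x)) i j
        = ((evalNC g Xz).map (MvPolynomial.eval x)) i j := by
      rw [hf, hg, this]
    simpa [Matrix.map_apply] using hent
  -- step 2: transfer to ℕ coefficients by injectivity of ℕ → ℤ
  have hinj : Function.Injective
      (MvPolynomial.map (σ := σ) (Nat.castRingHom ℤ)) :=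
    MvPolynomial.map_injective _ Nat.cast_injective
  have keyN : evalNC f Xn = evalNC g Xn := by
    have hf := evalNC_ringHom (MvPolynomial.map (σ := σ) (Nat.castRingHom ℤ)).mapMatrix f Xn
    have hg := evalNC_ringHom (MvPolynomial.map (σ := σ) (Nat.castRingHom ℤ)).mapMatrix g Xn
    simp only [RingHom.mapMatrix_apply] at hf hg
    have hA : (fun k => (Xn k).map (MvPolynomial.map (σ := σ) (Nat.castRingHom ℤ))) = Xz := by
      funext k; ext i j; simp [hXn, hXz]
    rw [hA] at hf hg
    refine Matrix.ext fun i j => ?_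
    apply hinj
    have : ((evalNC f Xn).map (MvPolynomial.map (σ := σ) (Nat.castRingHom ℤ))) i j
        = ((evalNC g Xn).map (MvPolynomial.map (σ := σ) (Nat.castRingHom ℤ))) i j := by
      rw [hf, hg, keyZ]
    simpa [Matrix.map_apply] using this
  -- step 3: push to R via the evaluation hom
  set ψ : MvPolynomial σ ℕ →+* R :=
    MvPolynomial.eval₂Hom (Nat.castRingHom R) (fun s => A s.1 s.2.1 s.2.2) with hψ
  have hf := evalNC_ringHom ψ.mapMatrix f Xn
  have hg := evalNC_ringHom ψ.mapMatrix g Xn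
  simp only [RingHom.mapMatrix_apply] at hf hg
  have hA : (fun k => (Xn k).map ψ) = A := by
    funext k; ext i j; simp [hXn, hψ]
  rw [hA] at hf hg
  rw [← hf, ← hg, keyN]
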